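/- Let A ∈ ℝ^{n×n} be diagonalizable with a simple real eigenvalue λ₁ satisfying λ₁ > Re(λⱼ) for all other eigenvalues λⱼ, and suppose the right eigenvector v¹ and left eigenvector w¹ associated to λ₁ are entrywise strictly positive. Then for every nonzero entrywise nonnegative x ∈ ℝⁿ there exists τ₀ ≥ 0 such that exp(tA)x is entrywise strictly positive for all t ≥ τ₀. -/

import Mathlib

open Matrix
section AuxHelpers
open Polynomial

lemma aux_charpoly_conj {n : ℕ} (P M : Matrix (Fin n) (Fin n) ℂ) (hP : IsUnit P.det) :
    (P * M * P⁻¹).charpoly = M.charpoly := by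
  have hPQ : P * P⁻¹ = 1 := Matrix.mul_nonsing_inv P hP
  set f := (C : ℂ →+* ℂ[X]).mapMatrix (m := Fin n) with hf
  have hfPQ : f P * f P⁻¹ = 1 := by rw [← _root_.map_mul, hPQ, _root_.map_one]
  have hsc : Matrix.scalar (Fin n) (X : ℂ[X]) = (X : ℂ[X]) • (1 : Matrix (Fin n) (Fin n) ℂ[X]) := by
    rw [Matrix.scalar_apply]
    ext i j
    by_cases h : i = j <;> simp [h, Matrix.one_apply]
  have hcm : charmatrix (P * M * P⁻¹) = f P * charmatrix M * f P⁻¹ := by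
    rw [charmatrix, charmatrix, mul_sub, sub_mul]
    congr 1
    · rw [hsc, mul_smul_comm, mul_one, smul_mul_assoc, hfPQ]
    · rw [hf]; rw [_root_.map_mul, _root_.map_mul]
  rw [Matrix.charpoly, Matrix.charpoly, hcm, Matrix.det_mul, Matrix.det_mul,
    mul_comm (f P).det, mul_assoc, ← Matrix.det_mul, hfPQ, Matrix.det_one, mul_one]

lemma aux_charpoly_diagonal {n : ℕ} (d : Fin n → ℂ) :
    (Matrix.diagonal d).charpoly = ∏ j, (X - C (d j)) := by
  have hcm : charmatrix (Matrix.diagonal d) = Matrix.diagonal (fun j => X - C (d j)) := by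
    ext i j
    by_cases h : i = j
    · subst h; rw [charmatrix_apply_eq, Matrix.diagonal_apply_eq, Matrix.diagonal_apply_eq]
    · rw [charmatrix_apply_ne _ _ _ h, Matrix.diagonal_apply_ne _ h, Matrix.diagonal_apply_ne _ h,
        map_zero, neg_zero]
  rw [Matrix.charpoly, hcm, Matrix.det_diagonal]

lemma aux_card_filter {n : ℕ} (A : Matrix (Fin n) (Fin n) ℝ) (lam₁ : ℝ)
    (P : Matrix (Fin n) (Fin n) ℂ) (d : Fin n → ℂ) (hP : IsUnit P.det)
    (hPD : A.map (algebraMap ℝ ℂ) = P * Matrix.diagonal d * P⁻¹)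
    (hsimple : A.charpoly.rootMultiplicity lam₁ = 1) :
    (Finset.univ.filter fun j => d j = (lam₁ : ℂ)).card = 1 := by
  have h1 : (Matrix.diagonal d).charpoly.rootMultiplicity ((lam₁ : ℂ)) = 1 := by
    rw [← aux_charpoly_conj P _ hP, ← hPD, Matrix.charpoly_map]
    rw [show ((lam₁ : ℂ)) = algebraMap ℝ ℂ lam₁ from rfl,
      ← Polynomial.eq_rootMultiplicity_map (algebraMap ℝ ℂ).injective, hsimple]
  rw [aux_charpoly_diagonal] at h1
  have h2 : (∏ j, (X - C (d j))) = ((Finset.univ.val.map d).map fun a => X - C a).prod := by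
    rw [Multiset.map_map]; rfl
  rw [← Polynomial.count_roots, h2, Polynomial.roots_multiset_prod_X_sub_C,
    Multiset.count_map] at h1
  rw [← h1, Finset.card, Finset.filter_val]
  congr 1
  exact Multiset.filter_congr (fun j _ => by simp [eq_comm])

end AuxHelpers


/-- For a diagonalizable matrix `A` with a simple real dominant eigenvalue `λ₁` whose
right and left eigenvectors are strictly positive, every trajectory `exp(tA) x` from a
nonzero nonnegative initial condition is eventually entrywise strictly positive. -/
theorem stmt_2 {n : ℕ} (A : Matrix (Fin n) (Fin n) ℝ) (lam₁ : ℝ)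
    (v w : Fin n → ℝ)
    (hdiag : ∃ (P : Matrix (Fin n) (Fin n) ℂ) (d : Fin n → ℂ), IsUnit P.det ∧
      A.map (algebraMap ℝ ℂ) = P * Matrix.diagonal d * P⁻¹)
    (hsimple : A.charpoly.rootMultiplicity lam₁ = 1)
    (heig : lam₁ ∈ spectrum ℝ A)
    (hdom : ∀ μ : ℂ, μ ∈ spectrum ℂ (A.map (algebraMap ℝ ℂ)) → μ ≠ (lam₁ : ℂ) →
      μ.re < lam₁)
    (hv : A.mulVec v = lam₁ • v) (hw : Matrix.vecMul w A = lam₁ • w)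
    (hvpos : ∀ i, 0 < v i) (hwpos : ∀ i, 0 < w i) :
    ∀ x : Fin n → ℝ, (∀ i, 0 ≤ x i) → x ≠ 0 →
      ∃ τ₀ : ℝ, 0 ≤ τ₀ ∧ ∀ t : ℝ, τ₀ ≤ t → ∀ i,
        0 < (NormedSpace.exp (t • A)).mulVec x i := by
  intro x hx hx0
  obtain ⟨P, d, hP, hPD⟩ := hdiag
  obtain ⟨i₀, hi₀⟩ := Function.ne_iff.mp hx0
  have hxi₀ : 0 < x i₀ := lt_of_le_of_ne (hx i₀) (Ne.symm (by simpa using hi₀))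
  have hPQ : P * P⁻¹ = 1 := Matrix.mul_nonsing_inv P hP
  have hQP : P⁻¹ * P = 1 := Matrix.nonsing_inv_mul P hP
  set lamc : ℂ := (lam₁ : ℂ) with hlamc
  set Aℂ := A.map (algebraMap ℝ ℂ) with hAc
  set vℂ : Fin n → ℂ := fun i => (v i : ℂ) with hvc
  set wℂ : Fin n → ℂ := fun i => (w i : ℂ) with hwc
  set xℂ : Fin n → ℂ := fun i => (x i : ℂ) with hxc
  have hAP : Aℂ * P = P * Matrix.diagonal d := by
    rw [hPD, mul_assoc (P * Matrix.diagonal d), hQP, mul_one]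
  have hQA : P⁻¹ * Aℂ = Matrix.diagonal d * P⁻¹ := by
    rw [hPD, ← mul_assoc, ← mul_assoc, hQP, one_mul]
  -- the unique index j₀ with d j₀ = lam₁
  obtain ⟨j₀, hj₀⟩ := Finset.card_eq_one.mp (aux_card_filter A lam₁ P d hP hPD hsimple)
  have hdj₀ : d j₀ = lamc := by
    have h := hj₀ ▸ Finset.mem_singleton_self j₀
    simpa using (Finset.mem_filter.mp h).2
  have hne : ∀ j, j ≠ j₀ → d j ≠ lamc := by
    intro j hj hdj
    exact hj (Finset.mem_singleton.mp
      (hj₀ ▸ Finset.mem_filter.mpr ⟨Finset.mem_univ _, hdj⟩))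
  -- complexified eigen-equations
  have hvC : Aℂ.mulVec vℂ = lamc • vℂ := by
    funext i
    have h := congrFun hv i
    simp only [Matrix.mulVec, dotProduct, Pi.smul_apply, smul_eq_mul] at h ⊢
    simp only [hAc, Matrix.map_apply, hvc, hlamc, Complex.coe_algebraMap]
    exact_mod_cast congrArg Complex.ofReal h
  have hwC : Matrix.vecMul wℂ Aℂ = lamc • wℂ := by
    funext k
    have h := congrFun hw k
    simp only [Matrix.vecMul, dotProduct, Pi.smul_apply, smul_eq_mul] at h ⊢
    simp only [hAc, Matrix.map_apply, hwc, hlamc, Complex.coe_algebraMap]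
    exact_mod_cast congrArg Complex.ofReal h
  -- left/right transformed eigenvectors vanish off j₀
  set y : Fin n → ℂ := Matrix.vecMul wℂ P with hy
  have hyj : ∀ j, j ≠ j₀ → y j = 0 := by
    intro j hj
    have h5 : Matrix.vecMul y (Matrix.diagonal d) = lamc • y := by
      rw [hy, Matrix.vecMul_vecMul, ← hAP, ← Matrix.vecMul_vecMul, hwC,
        Matrix.smul_vecMul]
    have h6 := congrFun h5 j
    rw [Matrix.vecMul_diagonal] at h6
    have h7 : y j * (d j - lamc) = 0 := by
      rw [Pi.smul_apply, smul_eq_mul] at h6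
      ring_nf
      linear_combination h6
    rcases mul_eq_zero.mp h7 with h | h
    · exact h
    · exact absurd (sub_eq_zero.mp h) (hne j hj)
  set z : Fin n → ℂ := Matrix.mulVec P⁻¹ vℂ with hz
  have hzj : ∀ j, j ≠ j₀ → z j = 0 := by
    intro j hj
    have h5 : Matrix.mulVec (Matrix.diagonal d) z = lamc • z := by
      rw [hz, Matrix.mulVec_mulVec, ← hQA, ← Matrix.mulVec_mulVec, hvC,
        Matrix.mulVec_smul]
    have h6 := congrFun h5 j
    rw [Matrix.mulVec_diagonal] at h6
    have h7 : z j * (d j - lamc) = 0 := by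
      rw [Pi.smul_apply, smul_eq_mul] at h6
      ring_nf
      linear_combination h6
    rcases mul_eq_zero.mp h7 with h | h
    · exact h
    · exact absurd (sub_eq_zero.mp h) (hne j hj)
  set a : ℂ := y j₀ with ha
  set b : ℂ := z j₀ with hb
  have hwk : ∀ k, a * P⁻¹ j₀ k = wℂ k := by
    intro k
    have h8 : Matrix.vecMul y P⁻¹ = wℂ := by
      rw [hy, Matrix.vecMul_vecMul, hPQ, Matrix.vecMul_one]
    have h9 := congrFun h8 k
    simp only [Matrix.vecMul, dotProduct] at h9
    rw [← h9]
    symm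
    apply Finset.sum_eq_single j₀
    · intro j _ hj; rw [hyj j hj, zero_mul]
    · intro h; exact absurd (Finset.mem_univ j₀) h
  have hvi : ∀ i, P i j₀ * b = vℂ i := by
    intro i
    have h8 : Matrix.mulVec P z = vℂ := by
      rw [hz, Matrix.mulVec_mulVec, hPQ, Matrix.one_mulVec]
    have h9 := congrFun h8 i
    simp only [Matrix.mulVec, dotProduct] at h9
    rw [← h9]
    symm
    apply Finset.sum_eq_single j₀
    · intro j _ hj; rw [hzj j hj, mul_zero]
    · intro h; exact absurd (Finset.mem_univ j₀) h
  have hbsum : b = ∑ k, P⁻¹ j₀ k * vℂ k := by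
    simp only [hb, hz, Matrix.mulVec, dotProduct]
  have hSwv : (0:ℝ) < ∑ k, w k * v k :=
    Finset.sum_pos (fun k _ => mul_pos (hwpos k) (hvpos k)) ⟨i₀, Finset.mem_univ _⟩
  have hSwx : (0:ℝ) < ∑ k, w k * x k :=
    Finset.sum_pos' (fun k _ => mul_nonneg (hwpos k).le (hx k))
      ⟨i₀, Finset.mem_univ _, mul_pos (hwpos i₀) hxi₀⟩
  have hab : a * b = ((∑ k, w k * v k : ℝ) : ℂ) := by
    rw [hbsum, Finset.mul_sum]
    push_cast
    exact Finset.sum_congr rfl fun k _ => by rw [← mul_assoc, hwk k]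
  have hSne : ((∑ k, w k * v k : ℝ) : ℂ) ≠ 0 := by exact_mod_cast hSwv.ne'
  have hkey : ∀ i, P i j₀ * (∑ k, P⁻¹ j₀ k * xℂ k)
      = (((∑ k, w k * v k)⁻¹ * (∑ k, w k * x k) * v i : ℝ) : ℂ) := by
    intro i
    have e1 : a * ∑ k, P⁻¹ j₀ k * xℂ k = ((∑ k, w k * x k : ℝ) : ℂ) := by
      rw [Finset.mul_sum]
      push_cast
      exact Finset.sum_congr rfl fun k _ => by rw [← mul_assoc, hwk k]
    have h10 : (P i j₀ * (∑ k, P⁻¹ j₀ k * xℂ k)) * (a * b)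
        = vℂ i * ((∑ k, w k * x k : ℝ) : ℂ) := by
      calc (P i j₀ * (∑ k, P⁻¹ j₀ k * xℂ k)) * (a * b)
          = (P i j₀ * b) * (a * ∑ k, P⁻¹ j₀ k * xℂ k) := by ring
        _ = vℂ i * ((∑ k, w k * x k : ℝ) : ℂ) := by rw [hvi i, e1]
    rw [hab] at h10
    have h11 : (((∑ k, w k * v k)⁻¹ * (∑ k, w k * x k) * v i : ℝ) : ℂ)
        * ((∑ k, w k * v k : ℝ) : ℂ) = vℂ i * ((∑ k, w k * x k : ℝ) : ℂ) := by
      have h11r : ((∑ k, w k * v k)⁻¹ * (∑ k, w k * x k) * v i) * (∑ k, w k * v k)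
          = v i * (∑ k, w k * x k) := by
        field_simp
      simp only [hvc]
      exact_mod_cast congrArg Complex.ofReal h11r
    exact mul_right_cancel₀ hSne (h10.trans h11.symm)
  -- spectrum facts
  have hspec : ∀ j, d j ∈ spectrum ℂ Aℂ := by
    intro j
    rw [spectrum.mem_iff]
    intro hu
    have hu' : IsUnit (algebraMap ℂ (Matrix (Fin n) (Fin n) ℂ) (d j) - Aℂ).det :=
      (Matrix.isUnit_iff_isUnit_det _).mp hu
    set M := algebraMap ℂ (Matrix (Fin n) (Fin n) ℂ) (d j) - Aℂ with hM
    have hMP : M.mulVec (fun i => P i j) = 0 := by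
      funext i
      have hA : (Aℂ * P) i j = (P * Matrix.diagonal d) i j := by rw [hAP]
      rw [Matrix.mul_apply, Matrix.mul_diagonal] at hA
      simp only [hM, Matrix.sub_mulVec, Pi.sub_apply, Pi.zero_apply]
      rw [Matrix.algebraMap_eq_diagonal]
      simp only [Matrix.mulVec_diagonal, Pi.algebraMap_apply, Algebra.algebraMap_self,
        RingHom.id_apply]
      rw [sub_eq_zero]
      simp only [Matrix.mulVec, dotProduct]
      rw [hA]
      ring
    have hcol : ∀ i, P i j = 0 := by
      intro i
      have h0 : M⁻¹.mulVec (M.mulVec fun i => P i j) = fun i => P i j := by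
        rw [Matrix.mulVec_mulVec, Matrix.nonsing_inv_mul _ hu', Matrix.one_mulVec]
      rw [hMP, Matrix.mulVec_zero] at h0
      exact (congrFun h0 i).symm
    exact IsUnit.ne_zero hP (Matrix.det_eq_zero_of_column_eq_zero j hcol)
  have hre : ∀ j, j ≠ j₀ → (d j).re < lam₁ := fun j hj => hdom (d j) (hspec j) (hne j hj)
  -- tendsto of the diagonal entries
  have hvtend : Filter.Tendsto
      (fun t : ℝ => fun j : Fin n => Complex.exp ((t : ℂ) * (d j - lamc)))
      Filter.atTop (nhds (fun j => if j = j₀ then (1:ℂ) else 0)) := by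
    rw [tendsto_pi_nhds]
    intro j
    by_cases hj : j = j₀
    · subst hj
      simp only [if_pos rfl, hdj₀, sub_self, mul_zero, Complex.exp_zero]
      exact tendsto_const_nhds
    · simp only [if_neg hj]
      rw [tendsto_zero_iff_norm_tendsto_zero]
      have hnorm : ∀ t : ℝ, ‖Complex.exp ((t:ℂ) * (d j - lamc))‖
          = Real.exp (t * ((d j).re - lam₁)) := by
        intro t
        rw [Complex.norm_exp]
        congr 1
        simp [hlamc, Complex.mul_re]
      simp only [hnorm]
      have hneg : (d j).re - lam₁ < 0 := sub_neg.mpr (hre j hj)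
      exact Real.tendsto_exp_atBot.comp
        (Filter.Tendsto.atTop_mul_neg hneg Filter.tendsto_id tendsto_const_nhds)
  set E : Matrix (Fin n) (Fin n) ℂ :=
    Matrix.diagonal (fun j => if j = j₀ then (1:ℂ) else 0) with hE
  have hΦ : ∀ i, Filter.Tendsto
      (fun t : ℝ => ((P * Matrix.diagonal
        (fun j => Complex.exp ((t:ℂ) * (d j - lamc))) * P⁻¹).mulVec xℂ) i)
      Filter.atTop (nhds (((P * E * P⁻¹).mulVec xℂ) i)) := by
    intro i
    have hcont : Continuous
        (fun g : Fin n → ℂ => ((P * Matrix.diagonal g * P⁻¹).mulVec xℂ) i) := by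
      apply Continuous.comp (continuous_apply i)
      exact Continuous.matrix_mulVec
        ((continuous_const.matrix_mul (continuous_id.matrix_diagonal)).matrix_mul
          continuous_const) continuous_const
    exact (hcont.tendsto _).comp hvtend
  have hLx : ∀ i, ((P * E * P⁻¹).mulVec xℂ) i
      = (((∑ k, w k * v k)⁻¹ * (∑ k, w k * x k) * v i : ℝ) : ℂ) := by
    intro i
    rw [← hkey i]
    have hPE : ∀ k, (P * E * P⁻¹) i k = P i j₀ * P⁻¹ j₀ k := by
      intro k
      rw [Matrix.mul_apply]
      rw [Finset.sum_eq_single j₀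
        (fun j _ hj => by simp [hE, Matrix.mul_diagonal, hj])
        (fun h => absurd (Finset.mem_univ j₀) h)]
      simp [hE, Matrix.mul_diagonal]
    simp only [Matrix.mulVec, dotProduct, hPE]
    rw [Finset.mul_sum]
    exact Finset.sum_congr rfl fun k _ => by ring
  -- matrix exponential identities
  set B : Matrix (Fin n) (Fin n) ℝ := A - lam₁ • 1 with hB
  have hconst : Matrix.diagonal (fun _ : Fin n => lamc)
      = lamc • (1 : Matrix (Fin n) (Fin n) ℂ) := by
    ext i j
    by_cases h : i = j <;> simp [h, Matrix.one_apply]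
  have hBconj : Aℂ - lamc • 1 = P * Matrix.diagonal (fun j => d j - lamc) * P⁻¹ := by
    have hdsub : Matrix.diagonal (fun j => d j - lamc)
        = Matrix.diagonal d - Matrix.diagonal (fun _ => lamc) := by
      rw [← Matrix.diagonal_sub]
    rw [hdsub, hconst, mul_sub, sub_mul, ← hPD, mul_smul_comm, smul_mul_assoc,
      mul_one, hPQ]
  have hdiagsm : ∀ t : ℝ, t • (Aℂ - lamc • 1)
      = P * Matrix.diagonal (fun j => (t : ℂ) * (d j - lamc)) * P⁻¹ := by
    intro t
    have h1 : Matrix.diagonal (fun j => (t : ℂ) * (d j - lamc))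
        = t • Matrix.diagonal (fun j => d j - lamc) := by
      ext i j
      by_cases h : i = j <;> simp [h, Complex.real_smul]
    rw [hBconj, h1, mul_smul_comm, smul_mul_assoc]
  have hexpB : ∀ t : ℝ, (NormedSpace.exp (t • B)).map (algebraMap ℝ ℂ)
      = P * Matrix.diagonal (fun j => Complex.exp ((t:ℂ) * (d j - lamc))) * P⁻¹ := by
    intro t
    have h1 : (NormedSpace.exp (t • B)).map (algebraMap ℝ ℂ)
        = NormedSpace.exp ((t • B).map (algebraMap ℝ ℂ)) := by
      letI : SeminormedRing (Matrix (Fin n) (Fin n) ℝ) := Matrix.linftyOpSemiNormedRing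
      letI : NormedRing (Matrix (Fin n) (Fin n) ℝ) := Matrix.linftyOpNormedRing
      letI : NormedAlgebra ℝ (Matrix (Fin n) (Fin n) ℝ) := Matrix.linftyOpNormedAlgebra
      letI : SeminormedRing (Matrix (Fin n) (Fin n) ℂ) := Matrix.linftyOpSemiNormedRing
      letI : NormedRing (Matrix (Fin n) (Fin n) ℂ) := Matrix.linftyOpNormedRing
      letI : NormedAlgebra ℝ (Matrix (Fin n) (Fin n) ℂ) := Matrix.linftyOpNormedAlgebra
      have hcont : Continuous
          (fun M : Matrix (Fin n) (Fin n) ℝ => M.map (algebraMap ℝ ℂ)) :=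
        Continuous.matrix_map continuous_id (continuous_algebraMap ℝ ℂ)
      have h := NormedSpace.map_exp_of_mem_ball (𝕂 := ℝ) ((algebraMap ℝ ℂ).mapMatrix (m := Fin n))
        hcont (t • B)
        ((NormedSpace.expSeries_radius_eq_top ℝ (Matrix (Fin n) (Fin n) ℝ)).symm ▸ edist_lt_top _ _)
      simp only [RingHom.mapMatrix_apply] at h
      exact h
    have h2 : (t • B).map (algebraMap ℝ ℂ) = t • (Aℂ - lamc • 1) := by
      ext i j
      by_cases h : i = j <;>
        simp [hB, hAc, hlamc, Matrix.map_apply, Matrix.sub_apply, Matrix.smul_apply,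
          Matrix.one_apply, h, Complex.real_smul] <;> push_cast <;> ring
    have h3 : NormedSpace.exp (t • (Aℂ - lamc • 1))
        = NormedSpace.exp (t • (Aℂ - lamc • 1)) :=
      rfl
    rw [h1, h2, h3, hdiagsm t, Matrix.exp_conj P _ ((Matrix.isUnit_iff_isUnit_det _).mpr hP),
      Matrix.exp_diagonal]
    have hh : (NormedSpace.exp fun j => (t:ℂ) * (d j - lamc))
        = fun j => Complex.exp ((t:ℂ) * (d j - lamc)) := by
      funext j
      rw [Pi.coe_exp]
      exact (congrFun Complex.exp_eq_exp_ℂ _).symm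
    rw [hh]
  have hrealv : ∀ t : ℝ, ∀ i,
      ((P * Matrix.diagonal (fun j => Complex.exp ((t:ℂ) * (d j - lamc))) * P⁻¹).mulVec xℂ) i
      = (((NormedSpace.exp (t • B)).mulVec x i : ℝ) : ℂ) := by
    intro t i
    rw [← hexpB t]
    simp only [Matrix.mulVec, dotProduct, Matrix.map_apply, hxc,
      Complex.coe_algebraMap]
    push_cast
    rfl
  have hlim : ∀ i, Filter.Tendsto (fun t : ℝ => (NormedSpace.exp (t • B)).mulVec x i)
      Filter.atTop (nhds ((∑ k, w k * v k)⁻¹ * (∑ k, w k * x k) * v i)) := by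
    intro i
    have h6 := (Complex.continuous_re.tendsto _).comp (hΦ i)
    have h7 : (fun t : ℝ =>
        (((P * Matrix.diagonal (fun j => Complex.exp ((t:ℂ) * (d j - lamc))) * P⁻¹).mulVec xℂ) i).re)
        = fun t : ℝ => (NormedSpace.exp (t • B)).mulVec x i := by
      funext t
      rw [hrealv t i, Complex.ofReal_re]
    rw [show (Complex.re ∘ fun t : ℝ =>
        ((P * Matrix.diagonal (fun j => Complex.exp ((t:ℂ) * (d j - lamc))) * P⁻¹).mulVec xℂ) i)
      = fun t : ℝ =>
        (((P * Matrix.diagonal (fun j => Complex.exp ((t:ℂ) * (d j - lamc))) * P⁻¹).mulVec xℂ) i).re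
      from rfl, h7, hLx i, Complex.ofReal_re] at h6
    exact h6
  -- splitting off the scalar exponential
  have hscal : ∀ r : ℝ, NormedSpace.exp (r • (1 : Matrix (Fin n) (Fin n) ℝ))
      = Real.exp r • (1 : Matrix (Fin n) (Fin n) ℝ) := by
    intro r
    letI : SeminormedRing (Matrix (Fin n) (Fin n) ℝ) := Matrix.linftyOpSemiNormedRing
    letI : NormedRing (Matrix (Fin n) (Fin n) ℝ) := Matrix.linftyOpNormedRing
    letI : NormedAlgebra ℝ (Matrix (Fin n) (Fin n) ℝ) := Matrix.linftyOpNormedAlgebra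
    have h := NormedSpace.algebraMap_exp_comm (𝔸 := Matrix (Fin n) (Fin n) ℝ) r
    rw [Algebra.algebraMap_eq_smul_one, Algebra.algebraMap_eq_smul_one] at h
    rw [Real.exp_eq_exp_ℝ]
    exact h.symm
  have hsplitv : ∀ t : ℝ, ∀ i, (NormedSpace.exp (t • A)).mulVec x i
      = Real.exp (t * lam₁) * (NormedSpace.exp (t • B)).mulVec x i := by
    intro t i
    have h1 : t • A = (t * lam₁) • (1 : Matrix (Fin n) (Fin n) ℝ) + t • B := by
      rw [hB]; module
    have hcomm : Commute ((t*lam₁) • (1 : Matrix (Fin n) (Fin n) ℝ)) (t • B) :=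
      ((Commute.one_left (t • B)).smul_left (t*lam₁))
    rw [h1, Matrix.exp_add_of_commute _ _ hcomm, hscal, smul_mul_assoc, one_mul,
      Matrix.smul_mulVec, Pi.smul_apply, smul_eq_mul]
  -- conclusion
  have hpos : ∀ i, 0 < (∑ k, w k * v k)⁻¹ * (∑ k, w k * x k) * v i :=
    fun i => mul_pos (mul_pos (inv_pos.mpr hSwv) hSwx) (hvpos i)
  have hev : ∀ᶠ t in Filter.atTop, ∀ i, 0 < (NormedSpace.exp (t • B)).mulVec x i :=
    Filter.eventually_all.mpr fun i => (hlim i).eventually (eventually_gt_nhds (hpos i))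
  obtain ⟨c₀, hc₀⟩ := Filter.eventually_atTop.mp hev
  refine ⟨max c₀ 0, le_max_right _ _, fun t ht i => ?_⟩
  rw [hsplitv t i]
  exact mul_pos (Real.exp_pos _) (hc₀ t (le_trans (le_max_left c₀ 0) ht) i)
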